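/- Let C ⊆ ℝⁿ be an open convex set and x ∈ ∂C. Then the lower density of C at x is positive and the upper density of C at x is at most 1/2; that is, liminf_{ρ→0} |C ∩ B(x,ρ)| / |B(x,ρ)| > 0 and limsup_{ρ→0} |C ∩ B(x,ρ)| / |B(x,ρ)| ≤ 1/2. In particular every point of ∂C has Lebesgue density strictly between 0 and 1, so the measure-theoretic essential boundary of C equals its topological boundary. -/

import Mathlib

open MeasureTheory Filter Topology Metric Set

lemma cone_subset {n : ℕ} {C : Set (EuclideanSpace ℝ (Fin n))}
    (hCopen : IsOpen C) (hCconv : Convex ℝ C) {x y : EuclideanSpace ℝ (Fin n)}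
    (hx : x ∈ closure C) {r t : ℝ} (hr : ball y r ⊆ C) (ht : 0 < t) (ht1 : t ≤ 1) :
    ball (x + t • (y - x)) (t * r) ⊆ C := by
  intro z hz
  set w : EuclideanSpace ℝ (Fin n) := y + t⁻¹ • (z - (x + t • (y - x))) with hw
  have hwy : w ∈ ball y r := by
    rw [mem_ball, dist_eq_norm]
    have : w - y = t⁻¹ • (z - (x + t • (y - x))) := by rw [hw]; abel
    rw [this, norm_smul, Real.norm_eq_abs, abs_of_pos (inv_pos.2 ht)]
    rw [mem_ball, dist_eq_norm] at hz
    calc t⁻¹ * ‖z - (x + t • (y - x))‖ < t⁻¹ * (t * r) := by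
          exact mul_lt_mul_of_pos_left hz (inv_pos.2 ht)
      _ = r := by field_simp
  have hzc : z = t • w + (1 - t) • x := by
    rw [hw]; match_scalars <;> field_simp <;> try ring
  have : z ∈ interior C := by
    rw [hzc]
    exact hCconv.combo_interior_closure_mem_interior
      (by rw [hCopen.interior_eq]; exact hr hwy) hx ht (by linarith) (by ring)
  rwa [hCopen.interior_eq] at this

lemma half_ball_le {n : ℕ} (x : EuclideanSpace ℝ (Fin n))
    (f : EuclideanSpace ℝ (Fin n) →L[ℝ] ℝ) {ρ : ℝ} :
    2 * volume ({z | f z < f x} ∩ ball x ρ) ≤ volume (ball x ρ) := by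
  set A : Set (EuclideanSpace ℝ (Fin n)) := {z | f z < f x} ∩ ball x ρ with hA
  set A' : Set (EuclideanSpace ℝ (Fin n)) := {z | f x < f z} ∩ ball x ρ with hA'
  have hmp : MeasurePreserving (fun t => (2:ℝ) • x - t)
      (volume : Measure (EuclideanSpace ℝ (Fin n))) volume :=
    Measure.measurePreserving_sub_left _ _
  have hpre : (fun t => (2:ℝ) • x - t) ⁻¹' A' = A := by
    ext z
    simp only [hA, hA', mem_preimage, mem_inter_iff, mem_setOf_eq, mem_ball]
    constructor
    · rintro ⟨h1, h2⟩
      refine ⟨?_, ?_⟩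
      · have : f ((2:ℝ) • x - z) = 2 * f x - f z := by
          rw [map_sub, _root_.map_smul]; simp [two_smul]
        rw [this] at h1; linarith
      · rwa [dist_eq_norm, show (2:ℝ) • x - z - x = -(z - x) by module, norm_neg,
          ← dist_eq_norm] at h2
    · rintro ⟨h1, h2⟩
      refine ⟨?_, ?_⟩
      · have : f ((2:ℝ) • x - z) = 2 * f x - f z := by
          rw [map_sub, _root_.map_smul]; simp [two_smul]
        rw [this]; linarith
      · rwa [dist_eq_norm, show (2:ℝ) • x - z - x = -(z - x) by module, norm_neg,
          ← dist_eq_norm]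
  have hAm : MeasurableSet A' :=
    ((isOpen_lt continuous_const f.continuous).inter isOpen_ball).measurableSet
  have heq : volume A = volume A' := by
    rw [← hpre]; exact hmp.measure_preimage hAm.nullMeasurableSet
  have hdisj : Disjoint A A' := by
    refine Set.disjoint_left.2 ?_
    rintro z ⟨h1, _⟩ ⟨h2, _⟩
    simp only [mem_setOf_eq] at h1 h2; exact absurd (h1.trans h2) (lt_irrefl _)
  calc 2 * volume A = volume A + volume A' := by rw [two_mul, heq]
    _ = volume (A ∪ A') := (measure_union hdisj hAm).symm
    _ ≤ volume (ball x ρ) := measure_mono (union_subset inter_subset_right inter_subset_right)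

/-- Let `C ⊆ ℝⁿ` be a nonempty open convex set and `x ∈ ∂C`. Then the
lower density of `C` at `x` is positive and the upper density is at most `1/2`:
`liminf_{ρ→0⁺} |C ∩ B(x,ρ)|/|B(x,ρ)| > 0` and `limsup_{ρ→0⁺} |C ∩ B(x,ρ)|/|B(x,ρ)| ≤ 1/2`.
In particular every boundary point has Lebesgue density neither `0` nor `1`, so the
measure-theoretic essential boundary of `C` coincides with its topological boundary. -/
theorem open_convex_boundary_density_bounds {n : ℕ}
    (C : Set (EuclideanSpace ℝ (Fin n))) (hCopen : IsOpen C) (hCconv : Convex ℝ C)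
    (hCne : C.Nonempty) :
    (∀ x ∈ frontier C,
      0 < liminf (fun ρ : ℝ =>
          volume (C ∩ Metric.ball x ρ) / volume (Metric.ball x ρ)) (𝓝[>] 0) ∧
      limsup (fun ρ : ℝ =>
          volume (C ∩ Metric.ball x ρ) / volume (Metric.ball x ρ)) (𝓝[>] 0)
        ≤ 1 / 2) ∧
    frontier C = {x : EuclideanSpace ℝ (Fin n) |
      ¬ Tendsto (fun ρ : ℝ =>
          volume (C ∩ Metric.ball x ρ) / volume (Metric.ball x ρ)) (𝓝[>] 0) (𝓝 0) ∧
      ¬ Tendsto (fun ρ : ℝ =>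
          volume (C ∩ Metric.ball x ρ) / volume (Metric.ball x ρ)) (𝓝[>] 0) (𝓝 1)} := by
  have key : ∀ x ∈ frontier C,
      0 < liminf (fun ρ : ℝ =>
          volume (C ∩ ball x ρ) / volume (ball x ρ)) (𝓝[>] 0) ∧
      limsup (fun ρ : ℝ =>
          volume (C ∩ ball x ρ) / volume (ball x ρ)) (𝓝[>] 0) ≤ 1 / 2 := by
    intro x hx
    rw [hCopen.frontier_eq] at hx
    obtain ⟨hxcl, hxnC⟩ := hx
    obtain ⟨y, hyC⟩ := hCne
    obtain ⟨r, hrpos, hball⟩ := Metric.isOpen_iff.1 hCopen y hyC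
    set D := dist y x with hD
    have hDpos : 0 < D := dist_pos.2 (fun h => hxnC (h ▸ hyC))
    have hrD : r ≤ D := by
      by_contra h
      push_neg at h
      exact hxnC (hball (by rwa [mem_ball, dist_comm] ))
    have hb0 : ∀ ρ : ℝ, 0 < ρ → volume (ball x ρ) ≠ 0 :=
      fun ρ hρ => (measure_ball_pos _ _ hρ).ne'
    have hbt : ∀ ρ : ℝ, volume (ball x ρ) ≠ ⊤ := fun ρ => measure_ball_lt_top.ne
    constructor
    · -- lower bound
      set c := ENNReal.ofReal ((r / (2 * D)) ^ n) with hc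
      have hcpos : 0 < c := ENNReal.ofReal_pos.2 (by positivity)
      have hev : ∀ ρ ∈ Ioc (0:ℝ) (2 * D),
          c ≤ volume (C ∩ ball x ρ) / volume (ball x ρ) := by
        rintro ρ ⟨hρ0, hρle⟩
        set t := ρ / (2 * D) with htdef
        have ht : 0 < t := by positivity
        have ht1 : t ≤ 1 := (div_le_one (by positivity)).2 hρle
        have hsub1 : ball (x + t • (y - x)) (t * r) ⊆ C :=
          cone_subset hCopen hCconv hxcl hball ht ht1
        have hdistc : dist (x + t • (y - x)) x = t * D := by
          rw [dist_eq_norm, show x + t • (y - x) - x = t • (y - x) by abel, norm_smul,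
            Real.norm_eq_abs, abs_of_pos ht, hD, dist_eq_norm]
        have htD : t * D = ρ / 2 := by
          field_simp [htdef]
          rw [htdef, div_mul_eq_mul_div, div_mul_eq_mul_div, div_eq_iff (by positivity)]; ring
        have hsub2 : ball (x + t • (y - x)) (t * r) ⊆ ball x ρ := by
          intro z hz
          rw [mem_ball] at hz ⊢
          calc dist z x ≤ dist z (x + t • (y - x)) + dist (x + t • (y - x)) x :=
                dist_triangle _ _ _
            _ < t * r + t * D := by rw [hdistc]; exact add_lt_add_of_lt_of_le hz le_rfl
            _ ≤ t * D + t * D := by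
                have : t * r ≤ t * D := mul_le_mul_of_nonneg_left hrD ht.le
                linarith
            _ = ρ := by rw [htD]; ring
        have hsub : ball (x + t • (y - x)) (t * r) ⊆ C ∩ ball x ρ :=
          subset_inter hsub1 hsub2
        have hvol : volume (ball (x + t • (y - x)) (t * r)) = c * volume (ball x ρ) := by
          have htr : t * r = (r / (2 * D)) * ρ := by rw [htdef]; ring
          rw [htr, Measure.addHaar_ball_mul_of_pos volume _ (by positivity : (0:ℝ) < r / (2 * D)),
            finrank_euclideanSpace_fin, ← Measure.addHaar_ball_center volume x, hc]
        rw [ENNReal.le_div_iff_mul_le (Or.inl (hb0 ρ hρ0)) (Or.inl (hbt ρ))]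
        calc c * volume (ball x ρ) = volume (ball (x + t • (y - x)) (t * r)) := hvol.symm
          _ ≤ volume (C ∩ ball x ρ) := measure_mono hsub
      have hev' : ∀ᶠ ρ in 𝓝[>] (0:ℝ),
          c ≤ volume (C ∩ ball x ρ) / volume (ball x ρ) := by
        filter_upwards [Ioc_mem_nhdsGT_of_mem (⟨le_refl 0, by positivity⟩ : (0:ℝ) ∈ Ico 0 (2*D))]
          with ρ hρ using hev ρ hρ
      exact lt_of_lt_of_le hcpos (le_liminf_of_le (by isBoundedDefault) hev')
    · -- upper bound
      obtain ⟨f, hf⟩ := geometric_hahn_banach_open_point hCconv hCopen hxnC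
      have hup : ∀ ρ : ℝ, 0 < ρ →
          volume (C ∩ ball x ρ) / volume (ball x ρ) ≤ 1 / 2 := by
        intro ρ hρ
        rw [ENNReal.div_le_iff (hb0 ρ hρ) (hbt ρ)]
        have h2 := half_ball_le x f (ρ := ρ)
        have hsub : C ∩ ball x ρ ⊆ {z | f z < f x} ∩ ball x ρ :=
          inter_subset_inter_left _ (fun a ha => hf a ha)
        calc volume (C ∩ ball x ρ) ≤ volume ({z | f z < f x} ∩ ball x ρ) :=
              measure_mono hsub
          _ = (1/2) * (2 * volume ({z | f z < f x} ∩ ball x ρ)) := by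
              rw [← mul_assoc, one_div, ENNReal.inv_mul_cancel two_ne_zero ENNReal.ofNat_ne_top,
                one_mul]
          _ ≤ 1 / 2 * volume (ball x ρ) := mul_le_mul_right h2 _
      refine limsup_le_of_le (by isBoundedDefault) ?_
      filter_upwards [self_mem_nhdsWithin] with ρ hρ using hup ρ hρ
  refine ⟨key, ?_⟩
  ext x
  simp only [mem_setOf_eq]
  constructor
  · intro hx
    obtain ⟨h1, h2⟩ := key x hx
    refine ⟨fun hT => ?_, fun hT => ?_⟩
    · rw [hT.liminf_eq] at h1
      exact lt_irrefl _ h1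
    · rw [hT.limsup_eq] at h2
      norm_num at h2
  · rintro ⟨h0, h1⟩
    by_contra hxf
    rw [hCopen.frontier_eq] at hxf
    have hcase : x ∈ C ∨ x ∉ closure C := by
      by_cases h : x ∈ closure C
      · left; by_contra hc; exact hxf ⟨h, hc⟩
      · right; exact h
    rcases hcase with hxC | hxncl
    · apply h1
      obtain ⟨ε, hε, hball2⟩ := Metric.isOpen_iff.1 hCopen x hxC
      have hev : (fun ρ : ℝ => volume (C ∩ ball x ρ) / volume (ball x ρ)) =ᶠ[𝓝[>] (0:ℝ)]
          (fun _ => 1) := by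
        filter_upwards [Ioo_mem_nhdsGT_of_mem (⟨le_refl 0, hε⟩ : (0:ℝ) ∈ Ico 0 ε)] with ρ hρ
        have hsub : ball x ρ ⊆ C := fun z hz =>
          hball2 (mem_ball.2 ((mem_ball.1 hz).trans hρ.2))
        rw [inter_eq_self_of_subset_right hsub,
          ENNReal.div_self (measure_ball_pos _ _ hρ.1).ne' measure_ball_lt_top.ne]
      exact Tendsto.congr' hev.symm tendsto_const_nhds
    · apply h0
      obtain ⟨ε, hε, hball2⟩ := Metric.isOpen_iff.1 isClosed_closure.isOpen_compl x hxncl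
      have hev : (fun ρ : ℝ => volume (C ∩ ball x ρ) / volume (ball x ρ)) =ᶠ[𝓝[>] (0:ℝ)]
          (fun _ => 0) := by
        filter_upwards [Ioo_mem_nhdsGT_of_mem (⟨le_refl 0, hε⟩ : (0:ℝ) ∈ Ico 0 ε)] with ρ hρ
        have hemp : C ∩ ball x ρ = ∅ := by
          ext z
          simp only [mem_inter_iff, mem_empty_iff_false, iff_false, not_and]
          intro hzC hzb
          exact hball2 (mem_ball.2 ((mem_ball.1 hzb).trans hρ.2)) (subset_closure hzC)
        rw [hemp, measure_empty, ENNReal.zero_div]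
      exact Tendsto.congr' hev.symm tendsto_const_nhds
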